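/- Let g ∈ K(y) be a univariate rational function and h ∈ K(x₁,…,xₙ) a multivariate rational function, both non-constant, and let f = g(h). Then deg f = (deg g)·(deg h), where the degree of a rational function written in lowest terms p/q is max(deg p, deg q) (total degree). -/

import Mathlib

open MvPolynomial

/-- Substitution of an element `a` of a field extension of `K` into a univariate
rational function `g ∈ K(t)` (the composition `g ∘ a`). -/
noncomputable def ratEval {K : Type*} [Field K] {L : Type*} [Field L] [Algebra K L]
    (g : RatFunc K) (a : L) : L :=
  Polynomial.aeval a g.num / Polynomial.aeval a g.denom

section DegreeCompositionAux
open Finset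
namespace Deg6
variable {K : Type*} [Field K] {n : ℕ}

lemma degree_eq_sum (d : Fin n →₀ ℕ) : d.degree = d.sum fun _ e => e := by
  rw [Finsupp.degree, Finsupp.sum]; rfl

lemma top_ne_zero {w : MvPolynomial (Fin n) K} (hw : w ≠ 0) :
    homogeneousComponent w.totalDegree w ≠ 0 := by
  obtain ⟨d, hd, hdeg⟩ := Finset.exists_mem_eq_sup w.support
    (support_nonempty.mpr hw) (fun s => s.sum fun _ e => e)
  intro h
  have hc : coeff d (homogeneousComponent w.totalDegree w) = coeff d w := by
    rw [coeff_homogeneousComponent, if_pos]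
    rw [degree_eq_sum, totalDegree, hdeg]
  rw [h, coeff_zero] at hc
  exact (mem_support_iff.mp hd) hc.symm

lemma tdeg_lt_of_comp_zero {w : MvPolynomial (Fin n) K} {N : ℕ} (hw : w ≠ 0)
    (hle : w.totalDegree ≤ N) (h : homogeneousComponent N w = 0) : w.totalDegree < N := by
  rcases lt_or_eq_of_le hle with h' | h'
  · exact h'
  · exact absurd (h' ▸ h) (top_ne_zero hw)

lemma comp_zero_of_small {w : MvPolynomial (Fin n) K} {N : ℕ}
    (h : w.totalDegree < N ∨ w = 0) : homogeneousComponent N w = 0 := by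
  rcases h with h | h
  · exact homogeneousComponent_eq_zero (h := h)
  · rw [h, map_zero]

lemma tdeg_homogeneousComponent_le (w : MvPolynomial (Fin n) K) (N : ℕ) :
    (homogeneousComponent N w).totalDegree ≤ N := by
  by_cases h : homogeneousComponent N w = 0
  · simp [h]
  · exact le_of_eq ((homogeneousComponent_isHomogeneous N w).totalDegree h)

/-- key: total degree multiplicative & top form multiplicative -/
lemma mul_top {u v : MvPolynomial (Fin n) K} (hu : u ≠ 0) (hv : v ≠ 0) :
    (u * v).totalDegree = u.totalDegree + v.totalDegree ∧
      homogeneousComponent (u.totalDegree + v.totalDegree) (u * v) =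
        homogeneousComponent u.totalDegree u * homogeneousComponent v.totalDegree v := by
  set du := u.totalDegree
  set dv := v.totalDegree
  set Tu := homogeneousComponent du u with hTu
  set Tv := homogeneousComponent dv v with hTv
  have hTu0 : Tu ≠ 0 := top_ne_zero hu
  have hTv0 : Tv ≠ 0 := top_ne_zero hv
  have hcompu : homogeneousComponent du (u - Tu) = 0 := by
    rw [map_sub, hTu, homogeneousComponent_of_mem (homogeneousComponent_mem du u), if_pos rfl]
    simp
  have hcompv : homogeneousComponent dv (v - Tv) = 0 := by
    rw [map_sub, hTv, homogeneousComponent_of_mem (homogeneousComponent_mem dv v), if_pos rfl]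
    simp
  have hsmallu : (u - Tu).totalDegree < du ∨ (u - Tu) = 0 := by
    by_cases h : u - Tu = 0
    · exact Or.inr h
    · refine Or.inl (tdeg_lt_of_comp_zero h ?_ hcompu)
      exact (totalDegree_sub u Tu).trans (max_le le_rfl (tdeg_homogeneousComponent_le u du))
  have hsmallv : (v - Tv).totalDegree < dv ∨ (v - Tv) = 0 := by
    by_cases h : v - Tv = 0
    · exact Or.inr h
    · refine Or.inl (tdeg_lt_of_comp_zero h ?_ hcompv)
      exact (totalDegree_sub v Tv).trans (max_le le_rfl (tdeg_homogeneousComponent_le v dv))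
  have hsmall_mul : ∀ (x y : MvPolynomial (Fin n) K) (a b : ℕ),
      (x.totalDegree < a ∨ x = 0) → (y.totalDegree ≤ b) →
      homogeneousComponent (a + b) (x * y) = 0 := by
    intro x y a b hx hy
    rcases hx with hx | hx
    · apply comp_zero_of_small
      by_cases hy0 : x * y = 0
      · exact Or.inr hy0
      · exact Or.inl <| lt_of_le_of_lt (totalDegree_mul x y)
          (by omega)
    · rw [hx, zero_mul, map_zero]
  have hexp : u * v = Tu * Tv + ((u - Tu) * Tv + Tu * (v - Tv) + (u - Tu) * (v - Tv)) := by ring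
  have hTT : (Tu * Tv) ∈ homogeneousSubmodule (Fin n) K (du + dv) :=
    (homogeneousComponent_isHomogeneous du u).mul (homogeneousComponent_isHomogeneous dv v)
  have hTTne : Tu * Tv ≠ 0 := mul_ne_zero hTu0 hTv0
  have hcomp_rem : homogeneousComponent (du + dv) ((u - Tu) * Tv + Tu * (v - Tv) + (u - Tu) * (v - Tv)) = 0 := by
    have e1 := hsmall_mul (u - Tu) Tv du dv hsmallu (tdeg_homogeneousComponent_le v dv)
    have e2 : homogeneousComponent (du + dv) (Tu * (v - Tv)) = 0 := by
      rw [mul_comm, Nat.add_comm du dv]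
      exact hsmall_mul _ _ dv du hsmallv (tdeg_homogeneousComponent_le u du)
    have e3 : homogeneousComponent (du + dv) ((u - Tu) * (v - Tv)) = 0 := by
      apply hsmall_mul _ _ du dv hsmallu
      rcases hsmallv with h | h
      · exact le_of_lt h
      · simp [h]
    rw [map_add, map_add, e1, e2, e3]; simp
  have hcompmain : homogeneousComponent (du + dv) (u * v) = Tu * Tv := by
    rw [hexp, map_add, hcomp_rem, add_zero, homogeneousComponent_of_mem hTT, if_pos rfl]
  have hle : (u * v).totalDegree ≤ du + dv := totalDegree_mul u v
  have hge : ¬ (u * v).totalDegree < du + dv := by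
    intro hlt
    exact hTTne (hcompmain ▸ homogeneousComponent_eq_zero (h := hlt))
  exact ⟨le_antisymm hle (not_lt.mp hge), hcompmain⟩

lemma totalDegree_mul_eq {u v : MvPolynomial (Fin n) K} (hu : u ≠ 0) (hv : v ≠ 0) :
    (u * v).totalDegree = u.totalDegree + v.totalDegree := (mul_top hu hv).1

lemma totalDegree_pow_eq (u : MvPolynomial (Fin n) K) (hu : u ≠ 0) (k : ℕ) :
    (u ^ k).totalDegree = k * u.totalDegree := by
  induction k with
  | zero => simp
  | succ k ih =>
    rw [pow_succ, totalDegree_mul_eq (pow_ne_zero _ hu) hu, ih]; ring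

end Deg6

namespace Deg6
variable {K : Type*} [Field K] {n : ℕ}

lemma eq_C_of_tdeg_zero {z : MvPolynomial (Fin n) K} (h : z.totalDegree = 0) :
    z = C (coeff 0 z) := by
  conv_lhs => rw [← sum_homogeneousComponent z]
  rw [h]
  simp [homogeneousComponent_zero]

lemma tdeg_zero_of_aeval_zero (z : MvPolynomial (Fin n) K) (q : Polynomial K) (hq : q ≠ 0)
    (h : Polynomial.aeval z q = 0) : z.totalDegree = 0 := by
  by_contra hz
  have hz' : 0 < z.totalDegree := Nat.pos_of_ne_zero hz
  have hz0 : z ≠ 0 := by rintro rfl; simp at hz'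
  set k := q.natDegree with hk
  have hsum : Polynomial.aeval z q = ∑ i ∈ range (k + 1), C (q.coeff i) * z ^ i := by
    rw [Polynomial.aeval_eq_sum_range z]
    exact Finset.sum_congr rfl fun i _ => smul_eq_C_mul _ _
  rw [Finset.sum_range_succ] at hsum
  set head := C (q.coeff k) * z ^ k with hhead
  set tail := ∑ i ∈ range k, C (q.coeff i) * z ^ i with htail
  have hqk : q.coeff k ≠ 0 := Polynomial.leadingCoeff_ne_zero.mpr hq
  have hheadne : head ≠ 0 := mul_ne_zero (fun hc => hqk (by simpa using hc)) (pow_ne_zero _ hz0)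
  have hheaddeg : head.totalDegree = k * z.totalDegree := by
    rw [hhead, totalDegree_mul_eq (fun hc => hqk (by simpa using hc)) (pow_ne_zero _ hz0),
      totalDegree_C, totalDegree_pow_eq _ hz0, zero_add]
  have hkpos : 0 < k := by
    rcases Nat.eq_zero_or_pos k with h0 | h0
    · exfalso
      rw [hsum, htail, hhead, h0] at h
      simp at h
      exact hqk (h0 ▸ h)
    · exact h0
  have htaildeg : tail.totalDegree < k * z.totalDegree := by
    refine lt_of_le_of_lt (totalDegree_finset_sum _ _) ?_
    rw [Finset.sup_lt_iff (by positivity)]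
    intro i hi
    have : (C (q.coeff i) * z ^ i).totalDegree ≤ i * z.totalDegree := by
      refine (totalDegree_mul _ _).trans ?_
      simp [totalDegree_C]
      exact totalDegree_pow _ _
    refine this.trans_lt ?_
    have : i < k := Finset.mem_range.mp hi
    exact Nat.mul_lt_mul_of_lt_of_le this le_rfl hz'
  have : (tail + head).totalDegree = k * z.totalDegree :=
    hheaddeg ▸ totalDegree_add_eq_right_of_totalDegree_lt (hheaddeg ▸ htaildeg)
  rw [hsum] at h
  rw [h, totalDegree_zero] at this
  exact (Nat.mul_pos hkpos hz').ne' this.symm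

end Deg6

namespace Deg6
variable {K : Type*} [Field K] {n : ℕ}

set_option synthInstance.maxHeartbeats 1000000 in
lemma exists_C_of_aeval_zero (w : FractionRing (MvPolynomial (Fin n) K)) (q : Polynomial K)
    (hq : q ≠ 0) (h : Polynomial.aeval w q = 0) :
    ∃ c : K, w = algebraMap K (FractionRing (MvPolynomial (Fin n) K)) c := by
  have h1 : IsIntegral K w := isAlgebraic_iff_isIntegral.mp ⟨q, hq, h⟩
  have h2 : IsIntegral (MvPolynomial (Fin n) K) w := h1.tower_top
  obtain ⟨z, hz⟩ := IsIntegrallyClosed.isIntegral_iff.mp h2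
  have h3 : Polynomial.aeval z q = 0 := by
    apply IsFractionRing.injective (MvPolynomial (Fin n) K)
      (FractionRing (MvPolynomial (Fin n) K))
    rw [map_zero, ← h, ← hz]
    exact (Polynomial.aeval_algHom_apply
      (IsScalarTower.toAlgHom K (MvPolynomial (Fin n) K)
        (FractionRing (MvPolynomial (Fin n) K))) z q).symm
  have h4 := tdeg_zero_of_aeval_zero z q hq h3
  refine ⟨coeff 0 z, ?_⟩
  rw [← hz, IsScalarTower.algebraMap_apply K (MvPolynomial (Fin n) K), MvPolynomial.algebraMap_eq]
  exact congrArg _ (eq_C_of_tdeg_zero h4)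

set_option synthInstance.maxHeartbeats 1000000 in
lemma aeval_div_ne_zero {u v : MvPolynomial (Fin n) K} (hv : v ≠ 0)
    (hnc : ∀ c : K, u ≠ C c * v) (q : Polynomial K) (hq : q ≠ 0) :
    Polynomial.aeval
      ((algebraMap (MvPolynomial (Fin n) K) (FractionRing (MvPolynomial (Fin n) K)) u) /
        (algebraMap (MvPolynomial (Fin n) K) (FractionRing (MvPolynomial (Fin n) K)) v)) q ≠ 0 := by
  intro h0
  obtain ⟨c, hc⟩ := exists_C_of_aeval_zero _ q hq h0
  have hv' : algebraMap (MvPolynomial (Fin n) K) (FractionRing (MvPolynomial (Fin n) K)) v ≠ 0 :=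
    fun hc => hv (IsFractionRing.injective (MvPolynomial (Fin n) K)
      (FractionRing (MvPolynomial (Fin n) K)) (by rw [hc, map_zero]))
  rw [div_eq_iff hv'] at hc
  apply hnc c
  apply IsFractionRing.injective (MvPolynomial (Fin n) K) (FractionRing (MvPolynomial (Fin n) K))
  rw [map_mul, ← MvPolynomial.algebraMap_eq,
    ← IsScalarTower.algebraMap_apply K (MvPolynomial (Fin n) K)]
  exact hc

end Deg6

namespace Deg6
variable {K : Type*} [Field K] {n : ℕ}

noncomputable def Phi (r : Polynomial K) (u v : MvPolynomial (Fin n) K) (m : ℕ) :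
    MvPolynomial (Fin n) K :=
  ∑ i ∈ Finset.range (m + 1), C (r.coeff i) * u ^ i * v ^ (m - i)

set_option synthInstance.maxHeartbeats 1000000 in
lemma Phi_map (r : Polynomial K) (u v : MvPolynomial (Fin n) K) (m : ℕ) (hv : v ≠ 0)
    (hm : r.natDegree < m + 1) :
    algebraMap (MvPolynomial (Fin n) K) (FractionRing (MvPolynomial (Fin n) K)) (Phi r u v m) =
      (algebraMap (MvPolynomial (Fin n) K) (FractionRing (MvPolynomial (Fin n) K)) v) ^ m *
        Polynomial.aeval
          ((algebraMap (MvPolynomial (Fin n) K) (FractionRing (MvPolynomial (Fin n) K)) u) /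
            (algebraMap (MvPolynomial (Fin n) K) (FractionRing (MvPolynomial (Fin n) K)) v)) r := by
  set φ := algebraMap (MvPolynomial (Fin n) K) (FractionRing (MvPolynomial (Fin n) K))
  have hv' : φ v ≠ 0 := fun hc => hv (IsFractionRing.injective (MvPolynomial (Fin n) K)
      (FractionRing (MvPolynomial (Fin n) K)) (by rw [hc, map_zero]))
  rw [Polynomial.aeval_eq_sum_range' hm, Phi, map_sum, Finset.mul_sum]
  refine Finset.sum_congr rfl fun i hi => ?_
  have hi' : i ≤ m := Nat.lt_succ_iff.mp (Finset.mem_range.mp hi)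
  have hsplit : (φ v) ^ m = (φ v) ^ (m - i) * (φ v) ^ i := by
    rw [← pow_add]; congr 1; omega
  rw [map_mul, map_mul, map_pow, map_pow, Algebra.smul_def, div_pow, hsplit]
  have hC : φ (C (r.coeff i)) =
      algebraMap K (FractionRing (MvPolynomial (Fin n) K)) (r.coeff i) := by
    rw [IsScalarTower.algebraMap_apply K (MvPolynomial (Fin n) K), MvPolynomial.algebraMap_eq]
  rw [hC]
  field_simp

lemma term_le (c : K) (u v : MvPolynomial (Fin n) K) (i j : ℕ) :
    (C c * u ^ i * v ^ j).totalDegree ≤ i * u.totalDegree + j * v.totalDegree := by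
  refine (totalDegree_mul _ _).trans (add_le_add ?_ (totalDegree_pow _ _))
  refine (totalDegree_mul _ _).trans ?_
  simpa [totalDegree_C] using totalDegree_pow u i

lemma Phi_tdeg_le (r : Polynomial K) (u v : MvPolynomial (Fin n) K) (m : ℕ) :
    (Phi r u v m).totalDegree ≤ m * max u.totalDegree v.totalDegree := by
  refine (totalDegree_finset_sum _ _).trans ?_
  refine Finset.sup_le fun i hi => ?_
  have hi' : i ≤ m := by simpa using Nat.lt_succ_iff.mp (Finset.mem_range.mp hi)
  refine (term_le _ _ _ _ _).trans ?_
  calc i * u.totalDegree + (m - i) * v.totalDegree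
      ≤ i * max u.totalDegree v.totalDegree + (m - i) * max u.totalDegree v.totalDegree :=
        add_le_add (Nat.mul_le_mul_left _ (le_max_left _ _))
          (Nat.mul_le_mul_left _ (le_max_right _ _))
    _ = m * max u.totalDegree v.totalDegree := by rw [← add_mul]; congr 1; omega

end Deg6

namespace Deg6
variable {K : Type*} [Field K] {n : ℕ}

lemma Phi_tdeg_low {r : Polynomial K} {u v : MvPolynomial (Fin n) K} {m : ℕ}
    (hb : u.totalDegree < v.totalDegree) (h0 : r.coeff 0 ≠ 0) (hv : v ≠ 0) :
    (Phi r u v m).totalDegree = m * v.totalDegree := by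
  rw [Phi, Finset.sum_range_succ']
  have hhead : (C (r.coeff 0) * u ^ 0 * v ^ (m - 0)).totalDegree = m * v.totalDegree := by
    rw [pow_zero, mul_one, Nat.sub_zero,
      totalDegree_mul_eq (fun hc => h0 (by simpa using hc)) (pow_ne_zero _ hv),
      totalDegree_C, totalDegree_pow_eq _ hv, zero_add]
  by_cases hm : m = 0
  · subst hm; simpa using hhead
  have htail : (∑ i ∈ Finset.range m, C (r.coeff (i + 1)) * u ^ (i + 1) * v ^ (m - (i + 1))).totalDegree
      < m * v.totalDegree := by
    refine lt_of_le_of_lt (totalDegree_finset_sum _ _) ?_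
    rw [Finset.sup_lt_iff (Nat.mul_pos (Nat.pos_of_ne_zero hm) (by omega))]
    intro i hi
    have hi' : i + 1 ≤ m := Finset.mem_range.mp hi
    refine (term_le _ _ _ _ _).trans_lt ?_
    calc (i + 1) * u.totalDegree + (m - (i + 1)) * v.totalDegree
        < (i + 1) * v.totalDegree + (m - (i + 1)) * v.totalDegree :=
          Nat.add_lt_add_right (mul_lt_mul_of_pos_left hb (Nat.succ_pos i)) _
      _ = m * v.totalDegree := by rw [← add_mul]; congr 1; omega
  rw [totalDegree_add_eq_right_of_totalDegree_lt (hhead ▸ htail), hhead]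

lemma Phi_tdeg_high {r : Polynomial K} {u v : MvPolynomial (Fin n) K} {m : ℕ}
    (hb : v.totalDegree < u.totalDegree) (hm : r.coeff m ≠ 0) (hu : u ≠ 0) :
    (Phi r u v m).totalDegree = m * u.totalDegree := by
  rw [Phi, Finset.sum_range_succ]
  have hhead : (C (r.coeff m) * u ^ m * v ^ (m - m)).totalDegree = m * u.totalDegree := by
    rw [Nat.sub_self, pow_zero, mul_one,
      totalDegree_mul_eq (fun hc => hm (by simpa using hc)) (pow_ne_zero _ hu),
      totalDegree_C, totalDegree_pow_eq _ hu, zero_add]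
  by_cases hm0 : m = 0
  · subst hm0; simpa using hhead
  have htail : (∑ i ∈ Finset.range m, C (r.coeff i) * u ^ i * v ^ (m - i)).totalDegree
      < m * u.totalDegree := by
    refine lt_of_le_of_lt (totalDegree_finset_sum _ _) ?_
    rw [Finset.sup_lt_iff (Nat.mul_pos (Nat.pos_of_ne_zero hm0) (by omega))]
    intro i hi
    have hi' : i < m := Finset.mem_range.mp hi
    refine (term_le _ _ _ _ _).trans_lt ?_
    calc i * u.totalDegree + (m - i) * v.totalDegree
        < i * u.totalDegree + (m - i) * u.totalDegree :=
          Nat.add_lt_add_left (mul_lt_mul_of_pos_left hb (by omega)) _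
      _ = m * u.totalDegree := by rw [← add_mul]; congr 1; omega
  rw [totalDegree_add_eq_right_of_totalDegree_lt (hhead ▸ htail), hhead]

lemma top_pow {u : MvPolynomial (Fin n) K} (hu : u ≠ 0) (k : ℕ) :
    homogeneousComponent ((u ^ k).totalDegree) (u ^ k) =
      (homogeneousComponent u.totalDegree u) ^ k := by
  induction k with
  | zero => simp [homogeneousComponent_of_mem (isHomogeneous_one (Fin n) K), pow_zero]
  | succ k ih =>
    have h1 := mul_top (pow_ne_zero k hu) hu
    rw [pow_succ, totalDegree_mul_eq (pow_ne_zero k hu) hu, h1.2, ih, pow_succ]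

end Deg6

namespace Deg6
variable {K : Type*} [Field K] {n : ℕ}

set_option synthInstance.maxHeartbeats 1000000 in
lemma Phi_tdeg_eq {r : Polynomial K} {u v : MvPolynomial (Fin n) K} {m : ℕ}
    (hd : u.totalDegree = v.totalDegree) (hu : u ≠ 0) (hv : v ≠ 0) (hr : r ≠ 0)
    (hm : r.natDegree < m + 1)
    (hnc : ∀ c : K, homogeneousComponent u.totalDegree u ≠
      C c * homogeneousComponent v.totalDegree v) :
    (Phi r u v m).totalDegree = m * v.totalDegree := by
  have hTu0 : homogeneousComponent u.totalDegree u ≠ 0 := top_ne_zero hu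
  have hTv0 : homogeneousComponent v.totalDegree v ≠ 0 := top_ne_zero hv
  have hcomp : homogeneousComponent (m * v.totalDegree) (Phi r u v m) =
      Phi r (homogeneousComponent u.totalDegree u) (homogeneousComponent v.totalDegree v) m := by
    rw [Phi, map_sum, Phi]
    refine Finset.sum_congr rfl fun i hi => ?_
    have hi' : i ≤ m := Nat.lt_succ_iff.mp (Finset.mem_range.mp hi)
    rw [mul_assoc, homogeneousComponent_C_mul, mul_assoc]
    congr 1
    have h1 := mul_top (pow_ne_zero i hu) (pow_ne_zero (m - i) hv)
    have hdegs : (u ^ i).totalDegree + (v ^ (m - i)).totalDegree = m * v.totalDegree := by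
      rw [totalDegree_pow_eq _ hu, totalDegree_pow_eq _ hv, hd, ← add_mul]
      congr 1; omega
    have key : homogeneousComponent ((u ^ i).totalDegree + (v ^ (m - i)).totalDegree)
        (u ^ i * v ^ (m - i)) =
        (homogeneousComponent u.totalDegree u) ^ i *
          (homogeneousComponent v.totalDegree v) ^ (m - i) := by
      rw [h1.2, top_pow hu, top_pow hv]
    exact hdegs ▸ key
  have hPhiTop_ne : Phi r (homogeneousComponent u.totalDegree u)
      (homogeneousComponent v.totalDegree v) m ≠ 0 := by
    intro hzero
    have hmap := Phi_map r (homogeneousComponent u.totalDegree u)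
      (homogeneousComponent v.totalDegree v) m hTv0 hm
    rw [hzero, map_zero] at hmap
    have hTv' : algebraMap (MvPolynomial (Fin n) K) (FractionRing (MvPolynomial (Fin n) K))
        (homogeneousComponent v.totalDegree v) ≠ 0 :=
      fun hc => hTv0 (IsFractionRing.injective (MvPolynomial (Fin n) K)
        (FractionRing (MvPolynomial (Fin n) K)) (by rw [hc, map_zero]))
    refine aeval_div_ne_zero hTv0 (fun c => hnc c) r hr ?_
    rcases mul_eq_zero.mp hmap.symm with h | h
    · exact absurd h (pow_ne_zero _ hTv')
    · exact h
  have hle : (Phi r u v m).totalDegree ≤ m * v.totalDegree := by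
    have := Phi_tdeg_le r u v m
    rwa [hd, max_self] at this
  rcases lt_or_eq_of_le hle with hlt | heq
  · exact absurd (hcomp ▸ homogeneousComponent_eq_zero (h := hlt)) hPhiTop_ne
  · exact heq

end Deg6

namespace Deg6
variable {K : Type*} [Field K] {n : ℕ}
lemma tdeg_C_mul_le (c : K) (w : MvPolynomial (Fin n) K) :
    (C c * w).totalDegree ≤ w.totalDegree :=
  (totalDegree_mul _ _).trans (by simp [totalDegree_C])

lemma sub_top_lt {hn hd : MvPolynomial (Fin n) K} (hd0 : 0 < hd.totalDegree)
    (heq : hn.totalDegree = hd.totalDegree) (c : K)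
    (hc : homogeneousComponent hn.totalDegree hn = C c * homogeneousComponent hd.totalDegree hd) :
    (hn - C c * hd).totalDegree < hd.totalDegree := by
  by_cases h0 : hn - C c * hd = 0
  · rw [h0]; simpa using hd0
  refine tdeg_lt_of_comp_zero h0 ?_ ?_
  · exact (totalDegree_sub _ _).trans (max_le (le_of_eq heq)
      ((tdeg_C_mul_le _ _).trans le_rfl))
  · rw [map_sub, homogeneousComponent_C_mul, ← heq, hc, heq, sub_self]

set_option synthInstance.maxHeartbeats 1000000 in
lemma Phi_translate (r : Polynomial K) (c : K) (u v : MvPolynomial (Fin n) K) (hv : v ≠ 0)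
    (m : ℕ) (hm : r.natDegree < m + 1) :
    Phi r u v m = Phi (r.comp (Polynomial.X + Polynomial.C c)) (u - C c * v) v m := by
  apply IsFractionRing.injective (MvPolynomial (Fin n) K) (FractionRing (MvPolynomial (Fin n) K))
  have hm' : (r.comp (Polynomial.X + Polynomial.C c)).natDegree < m + 1 := by
    rw [Polynomial.natDegree_comp, Polynomial.natDegree_X_add_C, mul_one]; exact hm
  rw [Phi_map _ _ _ _ hv hm, Phi_map _ _ _ _ hv hm']
  set φ := algebraMap (MvPolynomial (Fin n) K) (FractionRing (MvPolynomial (Fin n) K))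
  have hv' : φ v ≠ 0 := fun hc0 => hv (IsFractionRing.injective (MvPolynomial (Fin n) K)
      (FractionRing (MvPolynomial (Fin n) K)) (by rw [hc0, map_zero]))
  congr 1
  rw [Polynomial.aeval_comp]
  congr 1
  rw [map_add, Polynomial.aeval_X, Polynomial.aeval_C]
  have hCc : φ (C c) = algebraMap K (FractionRing (MvPolynomial (Fin n) K)) c := by
    rw [IsScalarTower.algebraMap_apply K (MvPolynomial (Fin n) K), MvPolynomial.algebraMap_eq]
  rw [map_sub, map_mul, hCc]
  field_simp
  rw [sub_add_cancel]

set_option synthInstance.maxHeartbeats 1000000 in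
lemma Phi_bezout (a b p q : Polynomial K) (hab : a * p + b * q = 1)
    (u v : MvPolynomial (Fin n) K) (hv : v ≠ 0) (m s : ℕ)
    (hp : p.natDegree < m + 1) (hq : q.natDegree < m + 1)
    (ha : a.natDegree < s + 1) (hb : b.natDegree < s + 1) :
    Phi a u v s * Phi p u v m + Phi b u v s * Phi q u v m = v ^ (s + m) := by
  apply IsFractionRing.injective (MvPolynomial (Fin n) K) (FractionRing (MvPolynomial (Fin n) K))
  set φ := algebraMap (MvPolynomial (Fin n) K) (FractionRing (MvPolynomial (Fin n) K))
  set h := φ u / φ v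
  rw [map_add, map_mul, map_mul, map_pow, Phi_map p u v m hv hp,
    Phi_map q u v m hv hq, Phi_map a u v s hv ha, Phi_map b u v s hv hb]
  have h1 : Polynomial.aeval h a * Polynomial.aeval h p
      + Polynomial.aeval h b * Polynomial.aeval h q = 1 := by
    rw [← map_mul, ← map_mul, ← map_add, hab, map_one]
  calc (φ v ^ s * Polynomial.aeval h a) * (φ v ^ m * Polynomial.aeval h p)
        + (φ v ^ s * Polynomial.aeval h b) * (φ v ^ m * Polynomial.aeval h q)
      = φ v ^ (s + m) * (Polynomial.aeval h a * Polynomial.aeval h p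
          + Polynomial.aeval h b * Polynomial.aeval h q) := by rw [pow_add]; ring
    _ = φ v ^ (s + m) := by rw [h1, mul_one]

lemma dvd_Phi_sub_head (r : Polynomial K) (u v : MvPolynomial (Fin n) K) (m : ℕ) :
    v ∣ Phi r u v m - C (r.coeff m) * u ^ m := by
  rw [Phi, Finset.sum_range_succ, Nat.sub_self, pow_zero, mul_one, add_sub_cancel_right]
  refine Finset.dvd_sum fun i hi => ?_
  have hi' : i < m := Finset.mem_range.mp hi
  exact dvd_mul_of_dvd_right (dvd_pow_self v (by omega)) _

end Deg6

namespace Deg6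
variable {K : Type*} [Field K] {n : ℕ}

set_option synthInstance.maxHeartbeats 1000000 in
lemma stepD (p q : Polynomial K) (hn hd : MvPolynomial (Fin n) K)
    (hp : p ≠ 0) (hq : q ≠ 0) (hpq : IsCoprime p q) (hhd : hd ≠ 0)
    (m : ℕ) (hm : m = max p.natDegree q.natDegree) (hm0 : 0 < m)
    (hh : 0 < max hn.totalDegree hd.totalDegree) :
    max (Phi p hn hd m).totalDegree (Phi q hn hd m).totalDegree =
      m * max hn.totalDegree hd.totalDegree := by
  have hpm : p.natDegree < m + 1 := by omega
  have hqm : q.natDegree < m + 1 := by omega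
  rcases lt_trichotomy hn.totalDegree hd.totalDegree with hab | hab | hab
  · -- low case
    rw [max_eq_right hab.le]
    have hone : p.coeff 0 ≠ 0 ∨ q.coeff 0 ≠ 0 := by
      by_contra hcon
      push_neg at hcon
      exact Polynomial.not_isUnit_X (hpq.isUnit_of_dvd'
        (Polynomial.X_dvd_iff.mpr hcon.1) (Polynomial.X_dvd_iff.mpr hcon.2))
    have hle1 : (Phi p hn hd m).totalDegree ≤ m * hd.totalDegree := by
      simpa [max_eq_right hab.le] using Phi_tdeg_le p hn hd m
    have hle2 : (Phi q hn hd m).totalDegree ≤ m * hd.totalDegree := by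
      simpa [max_eq_right hab.le] using Phi_tdeg_le q hn hd m
    rcases hone with h0 | h0
    · rw [max_eq_left (le_trans hle2 (Phi_tdeg_low hab h0 hhd).ge)]
      exact Phi_tdeg_low hab h0 hhd
    · rw [max_eq_right (le_trans hle1 (Phi_tdeg_low hab h0 hhd).ge)]
      exact Phi_tdeg_low hab h0 hhd
  · -- equal case
    rw [max_eq_right hab.le]
    have hdpos : 0 < hd.totalDegree := by omega
    have hhn : hn ≠ 0 := by
      intro h0; rw [h0, totalDegree_zero] at hab; omega
    by_cases hex : ∃ c : K, homogeneousComponent hn.totalDegree hn =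
        C c * homogeneousComponent hd.totalDegree hd
    · obtain ⟨c, hc⟩ := hex
      set p' := p.comp (Polynomial.X + Polynomial.C c) with hp'
      set q' := q.comp (Polynomial.X + Polynomial.C c) with hq'
      set hn' := hn - C c * hd with hhn'
      have htr1 : Phi p hn hd m = Phi p' hn' hd m := Phi_translate p c hn hd hhd m hpm
      have htr2 : Phi q hn hd m = Phi q' hn' hd m := Phi_translate q c hn hd hhd m hqm
      have hlow : hn'.totalDegree < hd.totalDegree := sub_top_lt hdpos hab c hc
      have hone : p'.coeff 0 ≠ 0 ∨ q'.coeff 0 ≠ 0 := by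
        have hev : IsCoprime (p.eval c) (q.eval c) := hpq.map (Polynomial.evalRingHom c)
        have h1 : p'.coeff 0 = p.eval c := by
          rw [hp', Polynomial.coeff_zero_eq_eval_zero, Polynomial.eval_comp]
          simp
        have h2 : q'.coeff 0 = q.eval c := by
          rw [hq', Polynomial.coeff_zero_eq_eval_zero, Polynomial.eval_comp]
          simp
        by_contra hcon
        push_neg at hcon
        rw [h1] at hcon
        rw [h2] at hcon
        rw [hcon.1, hcon.2] at hev
        exact not_isCoprime_zero_zero hev
      have hle1 : (Phi p' hn' hd m).totalDegree ≤ m * hd.totalDegree := by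
        simpa [max_eq_right hlow.le] using Phi_tdeg_le p' hn' hd m
      have hle2 : (Phi q' hn' hd m).totalDegree ≤ m * hd.totalDegree := by
        simpa [max_eq_right hlow.le] using Phi_tdeg_le q' hn' hd m
      rw [htr1, htr2]
      rcases hone with h0 | h0
      · rw [max_eq_left (le_trans hle2 (Phi_tdeg_low hlow h0 hhd).ge)]
        exact Phi_tdeg_low hlow h0 hhd
      · rw [max_eq_right (le_trans hle1 (Phi_tdeg_low hlow h0 hhd).ge)]
        exact Phi_tdeg_low hlow h0 hhd
    · push_neg at hex
      have heq1 : (Phi p hn hd m).totalDegree = m * hd.totalDegree :=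
        Phi_tdeg_eq hab hhn hhd hp hpm hex
      have hle2 : (Phi q hn hd m).totalDegree ≤ m * hd.totalDegree := by
        simpa [hab, max_self] using Phi_tdeg_le q hn hd m
      rw [max_eq_left (heq1 ▸ hle2), heq1]
  · -- high case
    rw [max_eq_left hab.le]
    have hhn : hn ≠ 0 := by
      intro h0; rw [h0, totalDegree_zero] at hab; omega
    have hone : p.coeff m ≠ 0 ∨ q.coeff m ≠ 0 := by
      rcases max_cases p.natDegree q.natDegree with ⟨h1, _⟩ | ⟨h1, _⟩
      · left; rw [hm, h1]; exact Polynomial.leadingCoeff_ne_zero.mpr hp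
      · right; rw [hm, h1]; exact Polynomial.leadingCoeff_ne_zero.mpr hq
    have hle1 : (Phi p hn hd m).totalDegree ≤ m * hn.totalDegree := by
      simpa [max_eq_left hab.le] using Phi_tdeg_le p hn hd m
    have hle2 : (Phi q hn hd m).totalDegree ≤ m * hn.totalDegree := by
      simpa [max_eq_left hab.le] using Phi_tdeg_le q hn hd m
    rcases hone with h0 | h0
    · rw [max_eq_left (le_trans hle2 (Phi_tdeg_high hab h0 hhn).ge)]
      exact Phi_tdeg_high hab h0 hhn
    · rw [max_eq_right (le_trans hle1 (Phi_tdeg_high hab h0 hhn).ge)]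
      exact Phi_tdeg_high hab h0 hhn

end Deg6

namespace Deg6
variable {K : Type*} [Field K] {n : ℕ}

lemma tdeg_eq_zero_of_isUnit {w : MvPolynomial (Fin n) K} (h : IsUnit w) :
    w.totalDegree = 0 := by
  obtain ⟨u, rfl⟩ := h
  have h1 : (u : MvPolynomial (Fin n) K) * (u⁻¹ : Units _) = 1 := u.mul_inv
  have h2 : (u : MvPolynomial (Fin n) K) ≠ 0 := left_ne_zero_of_mul_eq_one h1
  have h3 : ((u⁻¹ : Units _) : MvPolynomial (Fin n) K) ≠ 0 := right_ne_zero_of_mul_eq_one h1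
  have := totalDegree_mul_eq h2 h3
  rw [h1, totalDegree_one] at this
  omega

lemma tdeg_eq_of_dvd_dvd {a b : MvPolynomial (Fin n) K} (hab : a ∣ b) (hba : b ∣ a)
    (ha : a ≠ 0) (hb : b ≠ 0) : a.totalDegree = b.totalDegree := by
  obtain ⟨e, he⟩ := hab
  obtain ⟨f, hf⟩ := hba
  have he0 : e ≠ 0 := by rintro rfl; rw [mul_zero] at he; exact hb he
  have hf0 : f ≠ 0 := by rintro rfl; rw [mul_zero] at hf; exact ha hf
  have h1 : b.totalDegree = a.totalDegree + e.totalDegree := he ▸ totalDegree_mul_eq ha he0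
  have h2 : a.totalDegree = b.totalDegree + f.totalDegree := hf ▸ totalDegree_mul_eq hb hf0
  omega

end Deg6

open Deg6 in
set_option synthInstance.maxHeartbeats 1000000 in
set_option maxHeartbeats 1000000 in
theorem degree_multiplicative_of_uni_multivariate_composition'
    {K : Type*} [Field K] {n : ℕ}
    (fn fd hn hd : MvPolynomial (Fin n) K)
    (hfd : fd ≠ 0) (hhd : hd ≠ 0)
    (hcopf : ∀ d : MvPolynomial (Fin n) K, d ∣ fn → d ∣ fd → IsUnit d)
    (hcoph : ∀ d : MvPolynomial (Fin n) K, d ∣ hn → d ∣ hd → IsUnit d)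
    (g : RatFunc K)
    (hg : 0 < max g.num.natDegree g.denom.natDegree)
    (hh : 0 < max hn.totalDegree hd.totalDegree)
    (hcomp :
      (algebraMap (MvPolynomial (Fin n) K) (FractionRing (MvPolynomial (Fin n) K)) fn) /
        (algebraMap (MvPolynomial (Fin n) K) (FractionRing (MvPolynomial (Fin n) K)) fd) =
      Polynomial.aeval
        ((algebraMap (MvPolynomial (Fin n) K) (FractionRing (MvPolynomial (Fin n) K)) hn) /
          (algebraMap (MvPolynomial (Fin n) K) (FractionRing (MvPolynomial (Fin n) K)) hd)) g.num /
      Polynomial.aeval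
        ((algebraMap (MvPolynomial (Fin n) K) (FractionRing (MvPolynomial (Fin n) K)) hn) /
          (algebraMap (MvPolynomial (Fin n) K) (FractionRing (MvPolynomial (Fin n) K)) hd)) g.denom) :
    max fn.totalDegree fd.totalDegree =
      max g.num.natDegree g.denom.natDegree * max hn.totalDegree hd.totalDegree := by
  classical
  set φ := algebraMap (MvPolynomial (Fin n) K) (FractionRing (MvPolynomial (Fin n) K)) with hφ
  have hinj : Function.Injective φ :=
    IsFractionRing.injective (MvPolynomial (Fin n) K) (FractionRing (MvPolynomial (Fin n) K))
  set p := g.num with hpdef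
  set q := g.denom with hqdef
  set m := max p.natDegree q.natDegree with hmdef
  have hq0 : q ≠ 0 := g.denom_ne_zero
  have hp0 : p ≠ 0 := by
    intro h0
    have hgz : g = 0 := RatFunc.num_eq_zero_iff.mp h0
    rw [hmdef, hpdef, hqdef, hgz] at hg
    simp [RatFunc.num_zero, RatFunc.denom_zero] at hg
  have hpq : IsCoprime p q := g.isCoprime_num_denom
  have hpm : p.natDegree < m + 1 := by
    have := le_max_left p.natDegree q.natDegree; omega
  have hqm : q.natDegree < m + 1 := by
    have := le_max_right p.natDegree q.natDegree; omega
  have hnc_h : ∀ c : K, hn ≠ C c * hd := by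
    intro c hcon
    have hu : IsUnit hd := hcoph hd ⟨C c, by rw [hcon]; ring⟩ dvd_rfl
    have h1 : hd.totalDegree = 0 := tdeg_eq_zero_of_isUnit hu
    have h2 : hn.totalDegree ≤ hd.totalDegree := hcon ▸ tdeg_C_mul_le c hd
    omega
  set h := φ hn / φ hd with hhdef
  have hφhd : φ hd ≠ 0 := fun hc => hhd (hinj (by rw [hc, map_zero]))
  have haevp : Polynomial.aeval h p ≠ 0 := aeval_div_ne_zero hhd hnc_h p hp0
  have haevq : Polynomial.aeval h q ≠ 0 := aeval_div_ne_zero hhd hnc_h q hq0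
  set P := Phi p hn hd m with hPdef
  set Q := Phi q hn hd m with hQdef
  have hPmap : φ P = φ hd ^ m * Polynomial.aeval h p := Phi_map p hn hd m hhd hpm
  have hQmap : φ Q = φ hd ^ m * Polynomial.aeval h q := Phi_map q hn hd m hhd hqm
  have hP0 : P ≠ 0 := by
    intro h0
    rw [h0, map_zero] at hPmap
    exact mul_ne_zero (pow_ne_zero _ hφhd) haevp hPmap.symm
  have hQ0 : Q ≠ 0 := by
    intro h0
    rw [h0, map_zero] at hQmap
    exact mul_ne_zero (pow_ne_zero _ hφhd) haevq hQmap.symm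
  have hφQ : φ Q ≠ 0 := fun hc => hQ0 (hinj (by rw [hc, map_zero]))
  have hφfd : φ fd ≠ 0 := fun hc => hfd (hinj (by rw [hc, map_zero]))
  have hdiv : φ fn / φ fd = φ P / φ Q := by
    rw [hcomp, hPmap, hQmap, mul_div_mul_left _ _ (pow_ne_zero m hφhd)]
  have hcross : fn * Q = fd * P := by
    apply hinj
    rw [map_mul, map_mul]
    rw [div_eq_div_iff hφfd hφQ] at hdiv
    rw [hdiv]; ring
  -- coprimality of P and Q
  have hrelPQ : IsRelPrime P Q := by
    intro e he1 he2
    by_contra hue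
    have he0 : e ≠ 0 := by rintro rfl; exact hP0 (zero_dvd_iff.mp he1)
    obtain ⟨π, hirr, hπe⟩ := WfDvdMonoid.exists_irreducible_factor hue he0
    have hprime : Prime π := UniqueFactorizationMonoid.irreducible_iff_prime.mp hirr
    have hπP : π ∣ P := hπe.trans he1
    have hπQ : π ∣ Q := hπe.trans he2
    obtain ⟨α, β, hab⟩ := hpq
    set s := max α.natDegree β.natDegree with hsdef
    have hbez := Phi_bezout α β p q hab hn hd hhd m s hpm hqm
      (by have := le_max_left α.natDegree β.natDegree; omega)
      (by have := le_max_right α.natDegree β.natDegree; omega)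
    have hπhd : π ∣ hd := by
      refine hprime.dvd_of_dvd_pow (n := s + m) ?_
      rw [← hbez]
      exact dvd_add (hπP.mul_left _) (hπQ.mul_left _)
    have headdvd : ∀ r : Polynomial K, π ∣ Phi r hn hd m → π ∣ C (r.coeff m) * hn ^ m := by
      intro r hr
      have h1 : π ∣ Phi r hn hd m - C (r.coeff m) * hn ^ m :=
        hπhd.trans (dvd_Phi_sub_head r hn hd m)
      simpa using dvd_sub hr h1
    have hone : p.coeff m ≠ 0 ∨ q.coeff m ≠ 0 := by
      rcases max_cases p.natDegree q.natDegree with ⟨h1, _⟩ | ⟨h1, _⟩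
      · left; rw [hmdef, h1]; exact Polynomial.leadingCoeff_ne_zero.mpr hp0
      · right; rw [hmdef, h1]; exact Polynomial.leadingCoeff_ne_zero.mpr hq0
    have hπhn : π ∣ hn := by
      have key : ∀ c : K, c ≠ 0 → π ∣ C c * hn ^ m → π ∣ hn := by
        intro c hc hdvd
        refine hprime.dvd_of_dvd_pow (n := m) ?_
        have hu : IsUnit (C c : MvPolynomial (Fin n) K) :=
          (isUnit_iff_ne_zero.mpr hc).map MvPolynomial.C
        obtain ⟨cu, hcu⟩ := hu
        rw [← hcu] at hdvd
        exact Units.dvd_mul_left.mp hdvd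
      rcases hone with h0 | h0
      · exact key _ h0 (headdvd p hπP)
      · exact key _ h0 (headdvd q hπQ)
    exact hprime.not_unit (hcoph π hπhn hπhd)
  have hrelfnfd : IsRelPrime fn fd := fun d h1 h2 => hcopf d h1 h2
  have hfn0 : fn ≠ 0 := by
    rintro rfl
    rw [zero_mul] at hcross
    exact hP0 ((mul_eq_zero.mp hcross.symm).resolve_left hfd)
  -- mutual divisibility
  have hfdQ : fd ∣ Q := by
    refine IsRelPrime.dvd_of_dvd_mul_left (fun d h1 h2 => hcopf d h2 h1) ?_
    exact ⟨P, hcross.symm ▸ by rw [← hcross]⟩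
  have hQfd : Q ∣ fd := by
    refine IsRelPrime.dvd_of_dvd_mul_right hrelPQ.symm ?_
    exact ⟨fn, by rw [← hcross]; ring⟩
  have hfnP : fn ∣ P := by
    refine IsRelPrime.dvd_of_dvd_mul_left hrelfnfd ?_
    exact ⟨Q, hcross.symm⟩
  have hPfn : P ∣ fn := by
    refine IsRelPrime.dvd_of_dvd_mul_right hrelPQ ?_
    exact ⟨fd, by rw [hcross]; ring⟩
  have e1 : fn.totalDegree = P.totalDegree := tdeg_eq_of_dvd_dvd hfnP hPfn hfn0 hP0
  have e2 : fd.totalDegree = Q.totalDegree := tdeg_eq_of_dvd_dvd hfdQ hQfd hfd hQ0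
  rw [e1, e2]
  exact stepD p q hn hd hp0 hq0 hpq hhd m rfl hg hh


end DegreeCompositionAux

/-- For non-constant `g ∈ K(y)` and `h ∈ K(x₁,…,xₙ)`, the degree of
`f = g(h)` is `deg g · deg h`, where the degree of a rational function in lowest
terms `p/q` is `max(deg p, deg q)` (total degree). -/
theorem degree_multiplicative_of_uni_multivariate_composition
    {K : Type*} [Field K] {n : ℕ}
    (fn fd hn hd : MvPolynomial (Fin n) K)
    (hfd : fd ≠ 0) (hhd : hd ≠ 0)
    (hcopf : ∀ d : MvPolynomial (Fin n) K, d ∣ fn → d ∣ fd → IsUnit d)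
    (hcoph : ∀ d : MvPolynomial (Fin n) K, d ∣ hn → d ∣ hd → IsUnit d)
    (g : RatFunc K)
    (hg : 0 < max g.num.natDegree g.denom.natDegree)
    (hh : 0 < max hn.totalDegree hd.totalDegree)
    (hcomp :
      (algebraMap (MvPolynomial (Fin n) K) (FractionRing (MvPolynomial (Fin n) K)) fn) /
        (algebraMap (MvPolynomial (Fin n) K) (FractionRing (MvPolynomial (Fin n) K)) fd) =
      ratEval g
        ((algebraMap (MvPolynomial (Fin n) K) (FractionRing (MvPolynomial (Fin n) K)) hn) /
          (algebraMap (MvPolynomial (Fin n) K) (FractionRing (MvPolynomial (Fin n) K)) hd))) :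
    max fn.totalDegree fd.totalDegree =
      max g.num.natDegree g.denom.natDegree * max hn.totalDegree hd.totalDegree := by
  unfold ratEval at hcomp
  exact degree_multiplicative_of_uni_multivariate_composition' fn fd hn hd hfd hhd
    hcopf hcoph g hg hh hcomp
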